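/- Let E be a category with pullbacks and let (L, R) be an orthogonal factorization system on E: every morphism factors as a morphism in L followed by a morphism in R, L is exactly the class of morphisms orthogonal to every morphism of R, and R is exactly the class of morphisms g such that f ⊥ g for every f ∈ L. Then the following are equivalent: (i) L is stable under base change, i.e. every pullback of a morphism in L along an arbitrary morphism again lies in L; (ii) L is fiberwise orthogonal to R, i.e. for every f : A ⟶ B in L, every g in R, and every morphism Z ⟶ B, the pullback f_Z : A ×_B Z ⟶ Z of f along Z ⟶ B satisfies f_Z ⊥ g. -/
import Mathlib


open CategoryTheory Limits

/-- `f` is orthogonal to `g` (`f ⊥ g`): every commutative square from `f` to `g` admits a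
unique diagonal filler. -/
def Orth {E : Type*} [Category E] {A B X Y : E} (f : A ⟶ B) (g : X ⟶ Y) : Prop :=
  ∀ (u : A ⟶ X) (v : B ⟶ Y), u ≫ g = f ≫ v →
    ∃! d : B ⟶ X, f ≫ d = u ∧ d ≫ g = v

/-- For an orthogonal factorization system `(L, R)` on a category with
pullbacks, the left class `L` is stable under base change if and only if `L` is fiberwise
orthogonal to `R` (every base change of a map of `L` is orthogonal to every map of `R`);
i.e. `(L, R)` is a modality iff `L ⫫ R`. -/
theorem goodwillie_stmt_5 {E : Type*} [Category E] [HasPullbacks E]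
    (L R : MorphismProperty E)
    (fact : ∀ {A B : E} (f : A ⟶ B),
      ∃ (C : E) (l : A ⟶ C) (r : C ⟶ B), L l ∧ R r ∧ l ≫ r = f)
    (hL : ∀ {A B : E} (f : A ⟶ B), L f ↔ ∀ {X Y : E} (g : X ⟶ Y), R g → Orth f g)
    (hR : ∀ {X Y : E} (g : X ⟶ Y), R g ↔ ∀ {A B : E} (f : A ⟶ B), L f → Orth f g) :
    (∀ {A B Z P : E} (f : A ⟶ B) (z : Z ⟶ B) (p : P ⟶ A) (f' : P ⟶ Z),
        IsPullback p f' f z → L f → L f') ↔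
    (∀ {A B X Y : E} (f : A ⟶ B) (g : X ⟶ Y), L f → R g →
      ∀ {Z P : E} (z : Z ⟶ B) (p : P ⟶ A) (fZ : P ⟶ Z),
        IsPullback p fZ f z → Orth fZ g) := by
  constructor
  · intro stab A B X Y f g hf hg Z P z p fZ hP
    exact (hL fZ).mp (stab f z p fZ hP hf) g hg
  · intro fib A B Z P f z p f' hP hf
    exact (hL f').mpr fun g hg => fib f g hf hg z p f' hP
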